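/- Let V = Σᵢ (aᵢ eᵢ + a_{n+i} e_{n+i}) be a unit vector of the oscillator algebra 𝔤ₙ(λ). Then the restriction of A_Vᵀ A_V to the invariant 2-plane span(ξ, ζ) has characteristic polynomial μ² − (1/4 + Σᵢ λᵢ²(aᵢ² + a_{n+i}²)) μ + (1/8) Σ_{i,j} (λᵢ − λⱼ)² (aᵢ² + a_{n+i}²)(aⱼ² + a_{n+j}²). -/

import Mathlib

open scoped RealInnerProductSpace
open Finset

noncomputable section

/-- The underlying inner product space of the oscillator algebra `𝔤ₙ(λ)`:
a `(2n+2)`-dimensional real inner product space. -/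
abbrev Osc (n : ℕ) := EuclideanSpace ℝ (Fin (2*n+2))

/-- The basis vectors `e₁, …, eₙ`. -/
def oe (n : ℕ) (i : Fin n) : Osc n :=
  EuclideanSpace.single ⟨i.1, by have := i.2; omega⟩ 1

/-- The basis vectors `e_{n+1}, …, e_{2n}`. -/
def oE (n : ℕ) (i : Fin n) : Osc n :=
  EuclideanSpace.single ⟨n + i.1, by have := i.2; omega⟩ 1

/-- The basis vector `ξ`. -/
def oXi (n : ℕ) : Osc n := EuclideanSpace.single ⟨2*n, by omega⟩ 1

/-- The basis vector `ζ`. -/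
def oZeta (n : ℕ) : Osc n := EuclideanSpace.single ⟨2*n+1, by omega⟩ 1

/-- `br` is the Lie bracket of the oscillator algebra `𝔤ₙ(λ)`: the bilinear map
determined by `[eᵢ, e_{n+j}] = δᵢⱼ ξ`, `[ζ, eⱼ] = λⱼ e_{n+j}`, `[ζ, e_{n+j}] = −λⱼ eⱼ`,
all other brackets of basis vectors being zero. -/
structure IsOscBracket (n : ℕ) (lam : Fin n → ℝ)
    (br : Osc n →ₗ[ℝ] Osc n →ₗ[ℝ] Osc n) : Prop where
  anti : ∀ X Y : Osc n, br X Y = - br Y X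
  ee : ∀ i j : Fin n, br (oe n i) (oe n j) = 0
  eE : ∀ i j : Fin n, br (oe n i) (oE n j) = if i = j then oXi n else 0
  EE : ∀ i j : Fin n, br (oE n i) (oE n j) = 0
  exi : ∀ i : Fin n, br (oe n i) (oXi n) = 0
  Exi : ∀ i : Fin n, br (oE n i) (oXi n) = 0
  zee : ∀ j : Fin n, br (oZeta n) (oe n j) = lam j • oE n j
  zeE : ∀ j : Fin n, br (oZeta n) (oE n j) = - (lam j • oe n j)
  xize : br (oXi n) (oZeta n) = 0

/-- `nab` is the Levi-Civita connection of the left-invariant metric (evaluated on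
left-invariant fields): the bilinear map determined by the Koszul formula
`2 g(∇_X Y, Z) = g([X,Y], Z) − g([Y,Z], X) + g([Z,X], Y)`. -/
def IsLeviCivita (n : ℕ) (br nab : Osc n →ₗ[ℝ] Osc n →ₗ[ℝ] Osc n) : Prop :=
  ∀ X Y Z : Osc n,
    2 * ⟪nab X Y, Z⟫ = ⟪br X Y, Z⟫ - ⟪br Y Z, X⟫ + ⟪br Z X, Y⟫

/-- The Nomizu operator `A_V X = −∇_X V`. -/
def nomizu {n : ℕ} (nab : Osc n →ₗ[ℝ] Osc n →ₗ[ℝ] Osc n) (V X : Osc n) : Osc n :=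
  -(nab X V)

/-- The covariant derivative of the Nomizu operator:
`(∇_X A_V) Y = ∇_X (A_V Y) − A_V (∇_X Y)`. -/
def covNomizu {n : ℕ} (nab : Osc n →ₗ[ℝ] Osc n →ₗ[ℝ] Osc n) (V X Y : Osc n) : Osc n :=
  nab X (nomizu nab V Y) - nomizu nab V (nab X Y)

/-- The curvature tensor `R(X,Y)Z = ∇_X ∇_Y Z − ∇_Y ∇_X Z − ∇_{[X,Y]} Z`. -/
def curvR {n : ℕ} (br nab : Osc n →ₗ[ℝ] Osc n →ₗ[ℝ] Osc n) (X Y Z : Osc n) : Osc n :=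
  nab X (nab Y Z) - nab Y (nab X Z) - nab (br X Y) Z

/-- A unit vector `V ∈ 𝔤ₙ(λ)` is a *minimal* unit vector field if there is an orthonormal
basis `u₁, …, u_{2n+2}` of eigenvectors of `A_Vᵀ A_V` (the eigenvector condition being
expressed as `g(A_V W, A_V uᵢ) = σᵢ² g(W, uᵢ)` for all `W`) with eigenvalues `σᵢ²` such that
`Σᵢ ((∇_{uᵢ} A_V)uᵢ + A_V R(V, A_V uᵢ)uᵢ)/(1 + σᵢ²) = (Σᵢ σᵢ²/(1 + σᵢ²)) V`. -/
def IsMinimal {n : ℕ} (br nab : Osc n →ₗ[ℝ] Osc n →ₗ[ℝ] Osc n) (V : Osc n) : Prop :=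
  ∃ (u : Fin (2*n+2) → Osc n) (σ : Fin (2*n+2) → ℝ),
    (∀ i j, ⟪u i, u j⟫ = if i = j then 1 else 0) ∧
    (∀ i, ∀ W : Osc n,
      ⟪nomizu nab V W, nomizu nab V (u i)⟫ = (σ i)^2 * ⟪W, u i⟫) ∧
    (∑ i, (1 + (σ i)^2)⁻¹ •
        (covNomizu nab V (u i) (u i) +
          nomizu nab V (curvR br nab V (nomizu nab V (u i)) (u i))))
      = (∑ i, (σ i)^2 / (1 + (σ i)^2)) • V

/-- The operator `φ` with `φ eᵢ = e_{n+i}`, `φ e_{n+i} = −eᵢ`, `φ ξ = φ ζ = 0`. -/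
structure IsPhi (n : ℕ) (phi : Osc n →ₗ[ℝ] Osc n) : Prop where
  he : ∀ i : Fin n, phi (oe n i) = oE n i
  hE : ∀ i : Fin n, phi (oE n i) = - oe n i
  hxi : phi (oXi n) = 0
  hzeta : phi (oZeta n) = 0

/-- The operator `E_λ` with `E_λ eᵢ = λᵢ eᵢ`, `E_λ e_{n+i} = λᵢ e_{n+i}`, `E_λ ξ = E_λ ζ = 0`. -/
structure IsElam (n : ℕ) (lam : Fin n → ℝ) (El : Osc n →ₗ[ℝ] Osc n) : Prop where
  he : ∀ i : Fin n, El (oe n i) = lam i • oe n i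
  hE : ∀ i : Fin n, El (oE n i) = lam i • oE n i
  hxi : El (oXi n) = 0
  hzeta : El (oZeta n) = 0
variable {n : ℕ}

@[simp] lemma i_oe_oe (i j : Fin n) : ⟪oe n i, oe n j⟫ = if i = j then (1:ℝ) else 0 := by
  simp only [oe, EuclideanSpace.inner_single_left, map_one, one_mul,
    EuclideanSpace.single_apply, Fin.mk.injEq]
  by_cases h : i = j <;> simp [h, Fin.ext_iff]
  omega
@[simp] lemma i_oe_oE (i j : Fin n) : ⟪oe n i, oE n j⟫ = (0:ℝ) := by
  simp only [oe, oE, EuclideanSpace.inner_single_left, map_one, one_mul,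
    EuclideanSpace.single_apply, Fin.mk.injEq]
  have : ¬ ((i:ℕ) = n + j) := by omega
  simp [this]
@[simp] lemma i_oe_xi (i : Fin n) : ⟪oe n i, oXi n⟫ = (0:ℝ) := by
  simp only [oe, oXi, EuclideanSpace.inner_single_left, map_one, one_mul,
    EuclideanSpace.single_apply, Fin.mk.injEq]
  have : ¬ ((i:ℕ) = 2*n) := by omega
  simp [this]
@[simp] lemma i_oe_zeta (i : Fin n) : ⟪oe n i, oZeta n⟫ = (0:ℝ) := by
  simp only [oe, oZeta, EuclideanSpace.inner_single_left, map_one, one_mul,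
    EuclideanSpace.single_apply, Fin.mk.injEq]
  have : ¬ ((i:ℕ) = 2*n+1) := by omega
  simp [this]
@[simp] lemma i_oE_oE (i j : Fin n) : ⟪oE n i, oE n j⟫ = if i = j then (1:ℝ) else 0 := by
  simp only [oE, EuclideanSpace.inner_single_left, map_one, one_mul,
    EuclideanSpace.single_apply, Fin.mk.injEq]
  by_cases h : i = j <;> simp [h, Fin.ext_iff]
  omega
@[simp] lemma i_oE_xi (i : Fin n) : ⟪oE n i, oXi n⟫ = (0:ℝ) := by
  simp only [oE, oXi, EuclideanSpace.inner_single_left, map_one, one_mul,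
    EuclideanSpace.single_apply, Fin.mk.injEq]
  have : ¬ (n + (i:ℕ) = 2*n) := by omega
  simp [this]
@[simp] lemma i_oE_zeta (i : Fin n) : ⟪oE n i, oZeta n⟫ = (0:ℝ) := by
  simp only [oE, oZeta, EuclideanSpace.inner_single_left, map_one, one_mul,
    EuclideanSpace.single_apply, Fin.mk.injEq]
  have : ¬ (n + (i:ℕ) = 2*n+1) := by omega
  simp [this]
@[simp] lemma i_xi_xi : ⟪oXi n, oXi n⟫ = (1:ℝ) := by
  simp [oXi, EuclideanSpace.inner_single_left, EuclideanSpace.single_apply]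
@[simp] lemma i_xi_zeta : ⟪oXi n, oZeta n⟫ = (0:ℝ) := by
  simp only [oXi, oZeta, EuclideanSpace.inner_single_left, map_one, one_mul,
    EuclideanSpace.single_apply, Fin.mk.injEq]
  simp
@[simp] lemma i_zeta_zeta : ⟪oZeta n, oZeta n⟫ = (1:ℝ) := by
  simp [oZeta, EuclideanSpace.inner_single_left, EuclideanSpace.single_apply]
@[simp] lemma i_oE_oe (i j : Fin n) : ⟪oE n i, oe n j⟫ = (0:ℝ) := by
  rw [real_inner_comm]; simp [-PiLp.inner_apply]
@[simp] lemma i_xi_oe (i : Fin n) : ⟪oXi n, oe n i⟫ = (0:ℝ) := by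
  rw [real_inner_comm]; simp [-PiLp.inner_apply]
@[simp] lemma i_xi_oE (i : Fin n) : ⟪oXi n, oE n i⟫ = (0:ℝ) := by
  rw [real_inner_comm]; simp [-PiLp.inner_apply]
@[simp] lemma i_zeta_oe (i : Fin n) : ⟪oZeta n, oe n i⟫ = (0:ℝ) := by
  rw [real_inner_comm]; simp [-PiLp.inner_apply]
@[simp] lemma i_zeta_oE (i : Fin n) : ⟪oZeta n, oE n i⟫ = (0:ℝ) := by
  rw [real_inner_comm]; simp [-PiLp.inner_apply]
@[simp] lemma i_zeta_xi : ⟪oZeta n, oXi n⟫ = (0:ℝ) := by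
  rw [real_inner_comm]; simp [-PiLp.inner_apply]
@[simp] lemma n_xi : ‖oXi n‖ = (1:ℝ) := by
  have h := (i_xi_xi (n := n)); rw [real_inner_self_eq_norm_sq] at h
  nlinarith [norm_nonneg (oXi n)]
@[simp] lemma n_zeta : ‖oZeta n‖ = (1:ℝ) := by
  have h := (i_zeta_zeta (n := n)); rw [real_inner_self_eq_norm_sq] at h
  nlinarith [norm_nonneg (oZeta n)]

attribute [local simp] sum_inner inner_sum real_inner_smul_left real_inner_smul_right inner_add_left
  inner_add_right inner_sub_left inner_sub_right inner_neg_left inner_neg_right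

@[simp] lemma oe_inner_comb (k : Fin n) (α β : Fin n → ℝ) :
    ⟪oe n k, ∑ i, (α i • oe n i + β i • oE n i)⟫ = α k := by
  rw [inner_sum]; simp [-PiLp.inner_apply]
@[simp] lemma oE_inner_comb (k : Fin n) (α β : Fin n → ℝ) :
    ⟪oE n k, ∑ i, (α i • oe n i + β i • oE n i)⟫ = β k := by
  rw [inner_sum]; simp [-PiLp.inner_apply]
@[simp] lemma xi_inner_comb (α β : Fin n → ℝ) :
    ⟪oXi n, ∑ i, (α i • oe n i + β i • oE n i)⟫ = 0 := by
  rw [inner_sum]; simp [-PiLp.inner_apply]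
@[simp] lemma zeta_inner_comb (α β : Fin n → ℝ) :
    ⟪oZeta n, ∑ i, (α i • oe n i + β i • oE n i)⟫ = 0 := by
  rw [inner_sum]; simp [-PiLp.inner_apply]
@[simp] lemma comb_inner_oe (k : Fin n) (α β : Fin n → ℝ) :
    ⟪∑ i, (α i • oe n i + β i • oE n i), oe n k⟫ = α k := by
  rw [real_inner_comm]; simp [-PiLp.inner_apply]
@[simp] lemma comb_inner_oE (k : Fin n) (α β : Fin n → ℝ) :
    ⟪∑ i, (α i • oe n i + β i • oE n i), oE n k⟫ = β k := by
  rw [real_inner_comm]; simp [-PiLp.inner_apply]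
@[simp] lemma comb_inner_xi (α β : Fin n → ℝ) :
    ⟪∑ i, (α i • oe n i + β i • oE n i), oXi n⟫ = 0 := by
  rw [real_inner_comm]; simp [-PiLp.inner_apply]
@[simp] lemma comb_inner_zeta (α β : Fin n → ℝ) :
    ⟪∑ i, (α i • oe n i + β i • oE n i), oZeta n⟫ = 0 := by
  rw [real_inner_comm]; simp [-PiLp.inner_apply]

lemma inner_comb (α β γ δ : Fin n → ℝ) :
    ⟪∑ i, (α i • oe n i + β i • oE n i), ∑ i, (γ i • oe n i + δ i • oE n i)⟫
      = ∑ i, (α i * γ i + β i * δ i) := by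
  rw [sum_inner]; simp [-PiLp.inner_apply, Finset.sum_add_distrib, mul_comm]

lemma osc_ext (W W' : Osc n)
    (h1 : ∀ i : Fin n, ⟪W, oe n i⟫ = ⟪W', oe n i⟫)
    (h2 : ∀ i : Fin n, ⟪W, oE n i⟫ = ⟪W', oE n i⟫)
    (h3 : ⟪W, oXi n⟫ = ⟪W', oXi n⟫)
    (h4 : ⟪W, oZeta n⟫ = ⟪W', oZeta n⟫) : W = W' := by
  refine PiLp.ext fun k => ?_
  have hk := k.2
  rcases lt_or_ge k.1 n with h | h
  · have := h1 ⟨k.1, h⟩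
    rw [show oe n ⟨k.1, h⟩ = EuclideanSpace.single k 1 from
      congrArg (fun j => EuclideanSpace.single j 1) (Fin.ext rfl)] at this
    simpa [EuclideanSpace.inner_single_right] using this
  · rcases lt_or_ge k.1 (2*n) with h' | h'
    · have := h2 ⟨k.1 - n, by omega⟩
      rw [show oE n ⟨k.1 - n, by omega⟩ = EuclideanSpace.single k 1 from
        congrArg (fun j => EuclideanSpace.single j 1) (Fin.ext (by simp; omega))] at this
      simpa [EuclideanSpace.inner_single_right] using this
    · rcases Nat.lt_or_ge k.1 (2*n+1) with h'' | h''
      · rw [show oXi n = EuclideanSpace.single k 1 from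
          congrArg (fun j => EuclideanSpace.single j 1) (Fin.ext (by simp; omega))] at h3
        simpa [EuclideanSpace.inner_single_right] using h3
      · rw [show oZeta n = EuclideanSpace.single k 1 from
          congrArg (fun j => EuclideanSpace.single j 1) (Fin.ext (by simp; omega))] at h4
        simpa [EuclideanSpace.inner_single_right] using h4

set_option maxHeartbeats 2000000 in
/-- For a unit `V = Σᵢ (aᵢ eᵢ + a_{n+i} e_{n+i})`, the plane `span(ξ, ζ)` is invariant
under `A_Vᵀ A_V` and the restriction has characteristic polynomial
`μ² − (¼ + Σᵢ λᵢ²(aᵢ² + a_{n+i}²)) μ + ⅛ Σ_{i,j} (λᵢ − λⱼ)² (aᵢ² + a_{n+i}²)(aⱼ² + a_{n+j}²)`. -/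
theorem ata_char_poly (n : ℕ) (hn : 1 ≤ n) (lam : Fin n → ℝ)
    (br nab : Osc n →ₗ[ℝ] Osc n →ₗ[ℝ] Osc n)
    (hbr : IsOscBracket n lam br) (hlc : IsLeviCivita n br nab)
    (a b : Fin n → ℝ) (V : Osc n)
    (hV : V = ∑ i, (a i • oe n i + b i • oE n i)) (hVunit : ‖V‖ = 1)
    (AT : Osc n →ₗ[ℝ] Osc n)
    (hAT : ∀ X Y : Osc n, ⟪nomizu nab V X, Y⟫ = ⟪X, AT Y⟫) :
    ∃ p q r s : ℝ,
      AT (nomizu nab V (oXi n)) = p • oXi n + q • oZeta n ∧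
      AT (nomizu nab V (oZeta n)) = r • oXi n + s • oZeta n ∧
      ∀ μ : ℝ, (μ - p) * (μ - s) - q * r =
        μ^2 - ((1/4) + ∑ i, (lam i)^2 * ((a i)^2 + (b i)^2)) * μ
          + (1/8) * ∑ i, ∑ j, (lam i - lam j)^2 * ((a i)^2 + (b i)^2) * ((a j)^2 + (b j)^2) := by
  -- derived bracket identities
  have hEe : ∀ i j : Fin n, br (oE n i) (oe n j) = -(if j = i then oXi n else 0) :=
    fun i j => by rw [hbr.anti, hbr.eE]
  have hxie : ∀ i, br (oXi n) (oe n i) = 0 := fun i => by rw [hbr.anti, hbr.exi, neg_zero]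
  have hxiE : ∀ i, br (oXi n) (oE n i) = 0 := fun i => by rw [hbr.anti, hbr.Exi, neg_zero]
  have heze : ∀ j, br (oe n j) (oZeta n) = -(lam j • oE n j) :=
    fun j => by rw [hbr.anti, hbr.zee]
  have hEze : ∀ j, br (oE n j) (oZeta n) = lam j • oe n j :=
    fun j => by rw [hbr.anti, hbr.zeE, neg_neg]
  have hzexi : br (oZeta n) (oXi n) = 0 := by rw [hbr.anti, hbr.xize, neg_zero]
  have hxixi : br (oXi n) (oXi n) = 0 := by
    have h := hbr.anti (oXi n) (oXi n)
    have h2 : (2:ℝ) • br (oXi n) (oXi n) = 0 := by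
      rw [two_smul]; nth_rewrite 1 [h]; exact neg_add_cancel _
    simpa using (smul_eq_zero.mp h2).resolve_left (by norm_num)
  have hzeze : br (oZeta n) (oZeta n) = 0 := by
    have h := hbr.anti (oZeta n) (oZeta n)
    have h2 : (2:ℝ) • br (oZeta n) (oZeta n) = 0 := by
      rw [two_smul]; nth_rewrite 1 [h]; exact neg_add_cancel _
    simpa using (smul_eq_zero.mp h2).resolve_left (by norm_num)
  -- brackets with V
  have hbr_e_V : ∀ j, br (oe n j) V = b j • oXi n := fun j => by
    rw [hV, map_sum]; simp [hbr.ee, hbr.eE, smul_ite]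
  have hbr_E_V : ∀ j, br (oE n j) V = -(a j • oXi n) := fun j => by
    rw [hV, map_sum]; simp [hEe, hbr.EE, smul_ite, Finset.sum_neg_distrib]
  have hbr_xi_V : br (oXi n) V = 0 := by
    rw [hV, map_sum]; simp [hxie, hxiE]
  have hbr_ze_V : br (oZeta n) V
      = ∑ i, ((-(lam i * b i)) • oe n i + (lam i * a i) • oE n i) := by
    rw [hV, map_sum]
    refine Finset.sum_congr rfl fun i _ => ?_
    rw [map_add, map_smul, map_smul, hbr.zee, hbr.zeE]; module
  have hbr_V_e : ∀ k, br V (oe n k) = -(b k • oXi n) := fun k => by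
    rw [hbr.anti, hbr_e_V]
  have hbr_V_E : ∀ k, br V (oE n k) = a k • oXi n := fun k => by
    rw [hbr.anti, hbr_E_V, neg_neg]
  have hbr_V_xi : br V (oXi n) = 0 := by rw [hbr.anti, hbr_xi_V, neg_zero]
  have hbr_V_ze : br V (oZeta n)
      = -(∑ i, ((-(lam i * b i)) • oe n i + (lam i * a i) • oE n i)) := by
    rw [hbr.anti, hbr_ze_V]
  -- inner products with V
  have h_xi_V : ⟪oXi n, V⟫ = 0 := by rw [hV]; simp [-PiLp.inner_apply]
  have h_oe_V : ∀ k, ⟪oe n k, V⟫ = a k := fun k => by rw [hV]; simp [-PiLp.inner_apply]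
  have h_oE_V : ∀ k, ⟪oE n k, V⟫ = b k := fun k => by rw [hV]; simp [-PiLp.inner_apply]
  -- the four covariant derivatives of V
  have hnab_e : ∀ j, nab (oe n j) V = (b j / 2) • oXi n := by
    intro j
    refine osc_ext _ _ (fun k => ?_) (fun k => ?_) ?_ ?_
    · have h := hlc (oe n j) V (oe n k)
      rw [hbr_e_V, hbr_V_e, hbr.ee] at h
      simp [-PiLp.inner_apply] at h ⊢; linarith
    · have h := hlc (oe n j) V (oE n k)
      rw [hbr_e_V, hbr_V_E, hEe] at h
      by_cases hjk : j = k <;>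
        simp [-PiLp.inner_apply, hjk, h_xi_V] at h ⊢ <;> linarith
    · have h := hlc (oe n j) V (oXi n)
      rw [hbr_e_V, hbr_V_xi, hxie] at h
      simp [-PiLp.inner_apply] at h ⊢; linarith
    · have h := hlc (oe n j) V (oZeta n)
      rw [hbr_e_V, hbr_V_ze, hbr.zee] at h
      simp [-PiLp.inner_apply, h_oE_V] at h ⊢; linarith
  have hnab_E : ∀ j, nab (oE n j) V = (-(a j / 2)) • oXi n := by
    intro j
    refine osc_ext _ _ (fun k => ?_) (fun k => ?_) ?_ ?_
    · have h := hlc (oE n j) V (oe n k)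
      rw [hbr_E_V, hbr_V_e, hbr.eE] at h
      by_cases hkj : k = j <;>
        simp [-PiLp.inner_apply, hkj, h_xi_V] at h ⊢ <;> linarith
    · have h := hlc (oE n j) V (oE n k)
      rw [hbr_E_V, hbr_V_E, hbr.EE] at h
      simp [-PiLp.inner_apply] at h ⊢; linarith
    · have h := hlc (oE n j) V (oXi n)
      rw [hbr_E_V, hbr_V_xi, hxiE] at h
      simp [-PiLp.inner_apply] at h ⊢; linarith
    · have h := hlc (oE n j) V (oZeta n)
      rw [hbr_E_V, hbr_V_ze, hbr.zeE] at h
      simp [-PiLp.inner_apply, h_oe_V] at h ⊢; linarith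
  have hnab_xi : nab (oXi n) V = ∑ i, ((b i / 2) • oe n i + (-(a i / 2)) • oE n i) := by
    refine osc_ext _ _ (fun k => ?_) (fun k => ?_) ?_ ?_
    · have h := hlc (oXi n) V (oe n k)
      rw [hbr_xi_V, hbr_V_e, hbr.exi] at h
      simp [-PiLp.inner_apply] at h ⊢; linarith
    · have h := hlc (oXi n) V (oE n k)
      rw [hbr_xi_V, hbr_V_E, hbr.Exi] at h
      simp [-PiLp.inner_apply] at h ⊢; linarith
    · have h := hlc (oXi n) V (oXi n)
      rw [hbr_xi_V, hbr_V_xi, hxixi] at h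
      simp [-PiLp.inner_apply] at h ⊢; linarith
    · have h := hlc (oXi n) V (oZeta n)
      rw [hbr_xi_V, hbr_V_ze, hzexi] at h
      simp [-PiLp.inner_apply] at h ⊢; linarith
  have hnab_ze : nab (oZeta n) V
      = ∑ i, ((-(lam i * b i)) • oe n i + (lam i * a i) • oE n i) := by
    refine osc_ext _ _ (fun k => ?_) (fun k => ?_) ?_ ?_
    · have h := hlc (oZeta n) V (oe n k)
      rw [hbr_ze_V, hbr_V_e, heze] at h
      simp [-PiLp.inner_apply, h_oE_V] at h ⊢; linarith
    · have h := hlc (oZeta n) V (oE n k)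
      rw [hbr_ze_V, hbr_V_E, hEze] at h
      simp [-PiLp.inner_apply, h_oe_V] at h ⊢; linarith
    · have h := hlc (oZeta n) V (oXi n)
      rw [hbr_ze_V, hbr_V_xi, hbr.xize] at h
      simp [-PiLp.inner_apply] at h ⊢; linarith
    · have h := hlc (oZeta n) V (oZeta n)
      rw [hbr_ze_V, hbr_V_ze, hzeze] at h
      simp [-PiLp.inner_apply] at h ⊢; linarith
  -- Nomizu operator values
  have hnom_e : ∀ k, nomizu nab V (oe n k) = (-(b k / 2)) • oXi n := fun k => by
    show -(nab (oe n k) V) = _; rw [hnab_e]; module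
  have hnom_E : ∀ k, nomizu nab V (oE n k) = (a k / 2) • oXi n := fun k => by
    show -(nab (oE n k) V) = _; rw [hnab_E]; module
  have hnom_xi : nomizu nab V (oXi n)
      = ∑ i, ((-(b i / 2)) • oe n i + (a i / 2) • oE n i) := by
    show -(nab (oXi n) V) = _
    rw [hnab_xi, ← Finset.sum_neg_distrib]
    exact Finset.sum_congr rfl fun i _ => by module
  have hnom_ze : nomizu nab V (oZeta n)
      = ∑ i, ((lam i * b i) • oe n i + (-(lam i * a i)) • oE n i) := by
    show -(nab (oZeta n) V) = _
    rw [hnab_ze, ← Finset.sum_neg_distrib]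
    exact Finset.sum_congr rfl fun i _ => by module
  -- unit norm
  have hVV : ⟪V, V⟫ = ∑ i, ((a i)^2 + (b i)^2) := by
    rw [hV, inner_comb]; exact Finset.sum_congr rfl fun i _ => by ring
  have hsum : ∑ i, ((a i)^2 + (b i)^2) = 1 := by
    rw [← hVV, real_inner_self_eq_norm_mul_norm, hVunit]; norm_num
  -- inner products of the Nomizu images
  have h11 : ⟪nomizu nab V (oXi n), nomizu nab V (oXi n)⟫ = 1/4 := by
    rw [hnom_xi, inner_comb]
    trans (∑ i, ((a i)^2 + (b i)^2) * (1/4))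
    · exact Finset.sum_congr rfl fun i _ => by ring
    · rw [← Finset.sum_mul, hsum]; norm_num
  have h12 : ⟪nomizu nab V (oXi n), nomizu nab V (oZeta n)⟫
      = -(1/2) * ∑ i, lam i * ((a i)^2 + (b i)^2) := by
    rw [hnom_xi, hnom_ze, inner_comb]
    trans (∑ i, (lam i * ((a i)^2 + (b i)^2)) * (-(1/2)))
    · exact Finset.sum_congr rfl fun i _ => by ring
    · rw [← Finset.sum_mul]; ring
  have h21 : ⟪nomizu nab V (oZeta n), nomizu nab V (oXi n)⟫
      = -(1/2) * ∑ i, lam i * ((a i)^2 + (b i)^2) := by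
    rw [real_inner_comm]; exact h12
  have h22 : ⟪nomizu nab V (oZeta n), nomizu nab V (oZeta n)⟫
      = ∑ i, (lam i)^2 * ((a i)^2 + (b i)^2) := by
    rw [hnom_ze, inner_comb]
    exact Finset.sum_congr rfl fun i _ => by ring
  -- the images under AT
  have hATxi : AT (nomizu nab V (oXi n))
      = ((1:ℝ)/4) • oXi n + (-(1/2) * ∑ i, lam i * ((a i)^2 + (b i)^2)) • oZeta n := by
    refine osc_ext _ _ (fun k => ?_) (fun k => ?_) ?_ ?_
    · rw [real_inner_comm, ← hAT, hnom_e]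
      simp [-PiLp.inner_apply, hnom_xi]
    · rw [real_inner_comm, ← hAT, hnom_E]
      simp [-PiLp.inner_apply, hnom_xi]
    · rw [real_inner_comm, ← hAT, h11]
      simp [-PiLp.inner_apply]
    · rw [real_inner_comm, ← hAT, h21]
      simp [-PiLp.inner_apply]
  have hATze : AT (nomizu nab V (oZeta n))
      = (-(1/2) * ∑ i, lam i * ((a i)^2 + (b i)^2)) • oXi n
        + (∑ i, (lam i)^2 * ((a i)^2 + (b i)^2)) • oZeta n := by
    refine osc_ext _ _ (fun k => ?_) (fun k => ?_) ?_ ?_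
    · rw [real_inner_comm, ← hAT, hnom_e]
      simp [-PiLp.inner_apply, hnom_ze]
    · rw [real_inner_comm, ← hAT, hnom_E]
      simp [-PiLp.inner_apply, hnom_ze]
    · rw [real_inner_comm, ← hAT, h12]
      simp [-PiLp.inner_apply]
    · rw [real_inner_comm, ← hAT, h22]
      simp [-PiLp.inner_apply]
  refine ⟨(1:ℝ)/4, -(1/2) * ∑ i, lam i * ((a i)^2 + (b i)^2),
    -(1/2) * ∑ i, lam i * ((a i)^2 + (b i)^2),
    ∑ i, (lam i)^2 * ((a i)^2 + (b i)^2), hATxi, hATze, ?_⟩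
  intro μ
  have hdouble : ∑ i, ∑ j, (lam i - lam j)^2 * ((a i)^2 + (b i)^2) * ((a j)^2 + (b j)^2)
      = 2 * (∑ i, (lam i)^2 * ((a i)^2 + (b i)^2)) * (∑ i, ((a i)^2 + (b i)^2))
        - 2 * (∑ i, lam i * ((a i)^2 + (b i)^2))^2 := by
    have e1 : ∀ i : Fin n,
        ∑ j, (lam i - lam j)^2 * ((a i)^2 + (b i)^2) * ((a j)^2 + (b j)^2)
        = ((lam i)^2 * ((a i)^2 + (b i)^2)) * (∑ j, ((a j)^2 + (b j)^2))
          - (2 * (lam i * ((a i)^2 + (b i)^2))) * (∑ j, lam j * ((a j)^2 + (b j)^2))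
          + ((a i)^2 + (b i)^2) * (∑ j, (lam j)^2 * ((a j)^2 + (b j)^2)) := by
      intro i
      rw [Finset.mul_sum, Finset.mul_sum, Finset.mul_sum, ← Finset.sum_sub_distrib,
        ← Finset.sum_add_distrib]
      exact Finset.sum_congr rfl fun j _ => by ring
    rw [Finset.sum_congr rfl (fun i _ => e1 i), Finset.sum_add_distrib,
      Finset.sum_sub_distrib, ← Finset.sum_mul, ← Finset.sum_mul, ← Finset.sum_mul,
      show (∑ i, 2 * (lam i * ((a i)^2 + (b i)^2)))
          = 2 * ∑ i, lam i * ((a i)^2 + (b i)^2) from (Finset.mul_sum _ _ _).symm]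
    ring
  rw [hdouble, hsum]
  ring
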